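/- Let k₁ ∈ ℕ with k₁ ≥ 1 and suppose ω² = 4π²k₁²/(εμ·l₁²). Define E : ℝ³ → ℂ³ by E(x) = (0, sin(2πk₁x₁/l₁), 0) and H := 0. Then: (a) ∂₁²E₂ + ω²εμ·E₂ = 0 at every point of ℝ³, and E₁ = E₃ = 0 and H = 0 identically, so that (E,H) satisfies all six homogeneous Helmholtz-type equations ΔE₁ + ω²εμE₁ = 0, ΔH₁ + ω²εμH₁ = 0, ∂₁²E₂ + ω²εμE₂ = ∂₂∂₁E₁ + iωμ∂₃H₁, ∂₁²H₂ + ω²εμH₂ = ∂₂∂₁H₁ − iωε∂₃E₁, ∂₁²E₃ + ω²εμE₃ = ∂₃∂₁E₁ − iωμ∂₂H₁, ∂₁²H₃ + ω²εμH₃ = ∂₃∂₁H₁ + iωε∂₂E₁ pointwise; but (b) curl E(0) = (0, 0, 2πk₁/l₁) ≠ 0 = iωμ·H(0), so (E,H) does not satisfy curl E = iωμ·H. -/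

import Mathlib

open Real Complex Filter Topology

/-- Partial derivative in the first coordinate. -/
noncomputable def pd1 {F : Type*} [NormedAddCommGroup F] [NormedSpace ℝ F]
    (f : ℝ × ℝ × ℝ → F) (x : ℝ × ℝ × ℝ) : F :=
  deriv (fun t => f (t, x.2.1, x.2.2)) x.1

/-- Partial derivative in the second coordinate. -/
noncomputable def pd2 {F : Type*} [NormedAddCommGroup F] [NormedSpace ℝ F]
    (f : ℝ × ℝ × ℝ → F) (x : ℝ × ℝ × ℝ) : F :=
  deriv (fun t => f (x.1, t, x.2.2)) x.2.1

/-- Partial derivative in the third coordinate. -/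
noncomputable def pd3 {F : Type*} [NormedAddCommGroup F] [NormedSpace ℝ F]
    (f : ℝ × ℝ × ℝ → F) (x : ℝ × ℝ × ℝ) : F :=
  deriv (fun t => f (x.1, x.2.1, t)) x.2.2

/-- Curl of a complex vector field on ℝ³. -/
noncomputable def curl3 (F : ℝ × ℝ × ℝ → ℂ × ℂ × ℂ) (x : ℝ × ℝ × ℝ) : ℂ × ℂ × ℂ :=
  (pd2 (fun y => (F y).2.2) x - pd3 (fun y => (F y).2.1) x,
   pd3 (fun y => (F y).1) x - pd1 (fun y => (F y).2.2) x,
   pd1 (fun y => (F y).2.1) x - pd2 (fun y => (F y).1) x)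

/-- Divergence of a complex vector field on ℝ³. -/
noncomputable def div3 (F : ℝ × ℝ × ℝ → ℂ × ℂ × ℂ) (x : ℝ × ℝ × ℝ) : ℂ :=
  pd1 (fun y => (F y).1) x + pd2 (fun y => (F y).2.1) x + pd3 (fun y => (F y).2.2) x

/-- Laplacian of a scalar function on ℝ³. -/
noncomputable def lap {F : Type*} [NormedAddCommGroup F] [NormedSpace ℝ F]
    (f : ℝ × ℝ × ℝ → F) (x : ℝ × ℝ × ℝ) : F :=
  pd1 (pd1 f) x + pd2 (pd2 f) x + pd3 (pd3 f) x

/-- Gradient of a complex scalar function on ℝ³. -/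
noncomputable def grad3 (f : ℝ × ℝ × ℝ → ℂ) (x : ℝ × ℝ × ℝ) : ℂ × ℂ × ℂ :=
  (pd1 f x, pd2 f x, pd3 f x)

/-- for ω² ∈ σ(l₁), a solution of the homogeneous Helmholtz-type system need
not solve the homogeneous Maxwell system. -/
theorem stmt19 (l₁ ε μ ω : ℝ)
    (hl₁ : 0 < l₁) (hε : 0 < ε) (hμ : 0 < μ) (hω : 0 < ω)
    (k₁ : ℕ) (hk₁ : 1 ≤ k₁)
    (hω2 : ω ^ 2 = 4 * π ^ 2 * (k₁ : ℝ) ^ 2 / (ε * μ * l₁ ^ 2))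
    (E H : ℝ × ℝ × ℝ → ℂ × ℂ × ℂ)
    (hE : E = fun x => ((0 : ℂ), ((Real.sin (2 * π * (k₁ : ℝ) * x.1 / l₁) : ℝ) : ℂ), (0 : ℂ)))
    (hH : H = fun _ => (0 : ℂ × ℂ × ℂ)) :
    -- (a) the six homogeneous Helmholtz-type equations
    (∀ x : ℝ × ℝ × ℝ,
      pd1 (pd1 (fun y => (E y).2.1)) x
        + ((ω : ℂ) ^ 2 * (ε : ℂ) * (μ : ℂ)) * (E x).2.1 = 0) ∧
    (∀ x : ℝ × ℝ × ℝ, (E x).1 = 0 ∧ (E x).2.2 = 0 ∧ H x = 0) ∧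
    (∀ x : ℝ × ℝ × ℝ,
      lap (fun y => (E y).1) x + ((ω : ℂ) ^ 2 * (ε : ℂ) * (μ : ℂ)) * (E x).1 = 0) ∧
    (∀ x : ℝ × ℝ × ℝ,
      lap (fun y => (H y).1) x + ((ω : ℂ) ^ 2 * (ε : ℂ) * (μ : ℂ)) * (H x).1 = 0) ∧
    (∀ x : ℝ × ℝ × ℝ,
      pd1 (pd1 (fun y => (E y).2.1)) x + ((ω : ℂ) ^ 2 * (ε : ℂ) * (μ : ℂ)) * (E x).2.1
        = pd2 (pd1 (fun y => (E y).1)) x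
          + Complex.I * (ω : ℂ) * (μ : ℂ) * pd3 (fun y => (H y).1) x) ∧
    (∀ x : ℝ × ℝ × ℝ,
      pd1 (pd1 (fun y => (H y).2.1)) x + ((ω : ℂ) ^ 2 * (ε : ℂ) * (μ : ℂ)) * (H x).2.1
        = pd2 (pd1 (fun y => (H y).1)) x
          - Complex.I * (ω : ℂ) * (ε : ℂ) * pd3 (fun y => (E y).1) x) ∧
    (∀ x : ℝ × ℝ × ℝ,
      pd1 (pd1 (fun y => (E y).2.2)) x + ((ω : ℂ) ^ 2 * (ε : ℂ) * (μ : ℂ)) * (E x).2.2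
        = pd3 (pd1 (fun y => (E y).1)) x
          - Complex.I * (ω : ℂ) * (μ : ℂ) * pd2 (fun y => (H y).1) x) ∧
    (∀ x : ℝ × ℝ × ℝ,
      pd1 (pd1 (fun y => (H y).2.2)) x + ((ω : ℂ) ^ 2 * (ε : ℂ) * (μ : ℂ)) * (H x).2.2
        = pd3 (pd1 (fun y => (H y).1)) x
          + Complex.I * (ω : ℂ) * (ε : ℂ) * pd2 (fun y => (E y).1) x) ∧
    -- (b) but Maxwell's equation `curl E = iωμ H` fails at the origin
    (curl3 E ((0, 0, 0) : ℝ × ℝ × ℝ)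
        = ((0 : ℂ), (0 : ℂ), ((2 * π * (k₁ : ℝ) / l₁ : ℝ) : ℂ)) ∧
      ((2 * π * (k₁ : ℝ) / l₁ : ℝ) : ℂ) ≠ 0 ∧
      curl3 E ((0, 0, 0) : ℝ × ℝ × ℝ)
        ≠ (Complex.I * (ω : ℂ) * (μ : ℂ)) • H ((0, 0, 0) : ℝ × ℝ × ℝ)) := by
  subst hE hH
  set c : ℝ := 2 * π * (k₁ : ℝ) / l₁ with hc
  have harg : ∀ t : ℝ, 2 * π * (k₁ : ℝ) * t / l₁ = c * t := by
    intro t; rw [hc]; ring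
  have hsin : ∀ t : ℝ, HasDerivAt (fun s : ℝ => ((Real.sin (c * s) : ℝ) : ℂ))
      ((c * Real.cos (c * t) : ℝ) : ℂ) t := by
    intro t
    have h0 := (Real.hasDerivAt_sin (c * t)).comp t ((hasDerivAt_id t).const_mul c)
    have h1 : HasDerivAt (fun s : ℝ => Real.sin (c * s)) (c * Real.cos (c * t)) t := by
      refine h0.congr_deriv ?_
      ring
    exact h1.ofReal_comp
  have hcos : ∀ t : ℝ, HasDerivAt (fun s : ℝ => ((c * Real.cos (c * s) : ℝ) : ℂ))
      ((-(c ^ 2) * Real.sin (c * t) : ℝ) : ℂ) t := by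
    intro t
    have h0 := (Real.hasDerivAt_cos (c * t)).comp t ((hasDerivAt_id t).const_mul c)
    have h1 : HasDerivAt (fun s : ℝ => Real.cos (c * s)) (-(Real.sin (c * t)) * c) t := by
      refine h0.congr_deriv ?_
      ring
    have h2 : HasDerivAt (fun s : ℝ => c * Real.cos (c * s))
        (c * (-(Real.sin (c * t)) * c)) t := h1.const_mul c
    have h3 : HasDerivAt (fun s : ℝ => ((c * Real.cos (c * s) : ℝ) : ℂ))
        ((c * (-(Real.sin (c * t)) * c) : ℝ) : ℂ) t := h2.ofReal_comp
    convert h3 using 2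
    ring
  have hpd1 : pd1 (fun y : ℝ × ℝ × ℝ =>
      ((Real.sin (2 * π * (k₁ : ℝ) * y.1 / l₁) : ℝ) : ℂ))
      = fun y : ℝ × ℝ × ℝ => ((c * Real.cos (c * y.1) : ℝ) : ℂ) := by
    funext y
    simp only [pd1, harg]
    exact (hsin y.1).deriv
  have hpd11 : ∀ x : ℝ × ℝ × ℝ,
      pd1 (pd1 (fun y : ℝ × ℝ × ℝ =>
        ((Real.sin (2 * π * (k₁ : ℝ) * y.1 / l₁) : ℝ) : ℂ))) x
      = ((-(c ^ 2) * Real.sin (c * x.1) : ℝ) : ℂ) := by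
    intro x
    rw [hpd1]
    simp only [pd1]
    exact (hcos x.1).deriv
  have hc2 : (ω : ℂ) ^ 2 * (ε : ℂ) * (μ : ℂ) = ((c ^ 2 : ℝ) : ℂ) := by
    have hr : ω ^ 2 * ε * μ = c ^ 2 := by
      rw [hω2, hc]; field_simp; ring
    push_cast [← hr]
    ring
  have key : ∀ x : ℝ × ℝ × ℝ,
      pd1 (pd1 (fun y : ℝ × ℝ × ℝ =>
        ((Real.sin (2 * π * (k₁ : ℝ) * y.1 / l₁) : ℝ) : ℂ))) x
      + ((ω : ℂ) ^ 2 * (ε : ℂ) * (μ : ℂ))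
        * ((Real.sin (2 * π * (k₁ : ℝ) * x.1 / l₁) : ℝ) : ℂ) = 0 := by
    intro x
    rw [hpd11 x, hc2, harg x.1]
    push_cast
    ring
  have hcpos : 0 < c := by
    rw [hc]
    have : (0:ℝ) < (k₁:ℝ) := by exact_mod_cast hk₁
    positivity
  have h1 : pd1 (fun y : ℝ × ℝ × ℝ =>
      ((Real.sin (2 * π * (k₁ : ℝ) * y.1 / l₁) : ℝ) : ℂ)) ((0,0,0) : ℝ × ℝ × ℝ)
      = ((c : ℝ) : ℂ) := by
    rw [hpd1]
    norm_num
  refine ⟨by simpa using key, by simp, ?_, ?_, ?_, ?_, ?_, ?_, ?_, ?_, ?_⟩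
  · intro x; simp [lap, pd1, pd2, pd3]
  · intro x; simp [lap, pd1, pd2, pd3]
  · intro x
    simp only [pd1, pd2, pd3, deriv_const']
    have := key x
    simp only [pd1] at this
    simpa using this
  · intro x; simp [pd1, pd2, pd3]
  · intro x; simp [pd1, pd2, pd3]
  · intro x; simp [pd1, pd2, pd3]
  · -- curl E at 0
    simp only [pd1] at h1
    simp only [curl3, pd1, pd2, pd3]
    refine Prod.ext (by simp) (Prod.ext (by simp) ?_)
    simp only [deriv_const', sub_zero]
    exact h1
  · exact_mod_cast ne_of_gt hcpos
  · intro hcontra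
    have h3 := congrArg (fun p : ℂ × ℂ × ℂ => p.2.2) hcontra
    simp only [curl3] at h3
    simp only [pd1] at h1
    simp only [pd1, pd2, pd3, Prod.smul_mk, smul_zero] at h3
    simp only [deriv_const', sub_zero, h1, Prod.snd_zero] at h3
    exact absurd (Complex.ofReal_eq_zero.mp h3) (ne_of_gt hcpos)
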